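/- Let n ≤ m be natural numbers, let a : Fin m → (Fin n → ℝ) be the rows of a system of linear inequalities and b : Fin m → ℝ, and let S be a subset of the row indices and p ∈ ℝⁿ a point such that p is the unique solution of the system aᵢ · x = bᵢ for all i ∈ S (i.e., {x ∈ ℝⁿ : ∀ i ∈ S, aᵢ · x = bᵢ} = {p}). Then there exists a subset S′ ⊆ S with exactly n elements such that p is the unique solution of the system aᵢ · x = bᵢ for all i ∈ S′. -/

import Mathlib

open scoped RealInnerProductSpace

theorem exists_n_hyperplanes_unique_intersection (n m : ℕ) (hnm : n ≤ m)
    (a : Fin m → (Fin n → ℝ)) (b : Fin m → ℝ) (S : Finset (Fin m)) (p : Fin n → ℝ)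
    (hp : {x : Fin n → ℝ | ∀ i ∈ S, ∑ j, a i j * x j = b i} = {p}) :
    ∃ S' ⊆ S, S'.card = n ∧
      {x : Fin n → ℝ | ∀ i ∈ S', ∑ j, a i j * x j = b i} = {p} := by
  classical
  let a' : Fin m → EuclideanSpace ℝ (Fin n) := fun i => WithLp.toLp 2 (a i)
  let p' : EuclideanSpace ℝ (Fin n) := WithLp.toLp 2 p
  have hinner : ∀ (i : Fin m) (x : EuclideanSpace ℝ (Fin n)),
      ⟪a' i, x⟫ = ∑ j, a i j * x j := by
    intro i x
    rw [PiLp.inner_apply]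
    simp [RCLike.inner_apply, a', mul_comm]
  have hpS : ∀ i ∈ S, ∑ j, a i j * p j = b i := by
    have hpp : p ∈ ({p} : Set (Fin n → ℝ)) := rfl
    rw [← hp] at hpp; exact hpp
  -- Step 1: span of the normals over S is everything
  have hspan : Submodule.span ℝ (a' '' ↑S) = ⊤ := by
    rw [← Submodule.orthogonal_eq_bot_iff]
    rw [Submodule.eq_bot_iff]
    intro y hy
    have hy' : ∀ i ∈ S, ⟪a' i, y⟫ = 0 := by
      intro i hi
      exact (Submodule.mem_orthogonal _ y).mp hy (a' i)
        (Submodule.subset_span ⟨i, hi, rfl⟩)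
    have hmem : (p' + y : EuclideanSpace ℝ (Fin n)).ofLp ∈
        {x : Fin n → ℝ | ∀ i ∈ S, ∑ j, a i j * x j = b i} := by
      intro i hi
      calc ∑ j, a i j * (p' + y) j = ⟪a' i, p' + y⟫ := (hinner i _).symm
        _ = ⟪a' i, p'⟫ + ⟪a' i, y⟫ := inner_add_right _ _ _
        _ = (∑ j, a i j * p j) + 0 := by rw [hinner i p', hy' i hi]
        _ = b i := by rw [add_zero]; exact hpS i hi
    rw [hp] at hmem
    have : p' + y = p' := congrArg (WithLp.toLp 2) (show (p' + y).ofLp = p from hmem)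
    simpa using congrArg (fun z => z - p') this
  -- Step 2: extract a linearly independent spanning subset
  obtain ⟨s, hs_sub, hs_span, hs_li⟩ := exists_linearIndependent ℝ (a' '' ↑S)
  rw [hspan] at hs_span
  have hs_fin : s.Finite := hs_li.setFinite
  have hs_fintype : Fintype s := hs_fin.fintype
  let B : Module.Basis s ℝ (EuclideanSpace ℝ (Fin n)) :=
    Module.Basis.mk hs_li (by rw [Subtype.range_coe, hs_span])
  have hcard : Fintype.card s = n := by
    have h1 := Module.finrank_eq_card_basis B
    have h2 : Module.finrank ℝ (EuclideanSpace ℝ (Fin n)) = n := finrank_euclideanSpace_fin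
    omega
  -- Step 3: choose indices
  let t : Finset (EuclideanSpace ℝ (Fin n)) := hs_fin.toFinset
  have ht_mem : ∀ v ∈ t, ∃ i, i ∈ S ∧ a' i = v := by
    intro v hv
    obtain ⟨i, hi, hiv⟩ := hs_sub (hs_fin.mem_toFinset.mp hv)
    exact ⟨i, hi, hiv⟩
  let g : {v // v ∈ t} → Fin m := fun v => (ht_mem v.1 v.2).choose
  have hg : ∀ v : {v // v ∈ t}, g v ∈ S ∧ a' (g v) = v.1 :=
    fun v => (ht_mem v.1 v.2).choose_spec
  have hg_inj : Function.Injective g := by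
    intro v w h
    have hv := (hg v).2
    have hw := (hg w).2
    rw [h, hw] at hv
    exact Subtype.ext hv.symm
  have hS'sub : ∀ i ∈ t.attach.image g, i ∈ S := by
    intro i hi
    obtain ⟨v, _, rfl⟩ := Finset.mem_image.mp hi
    exact (hg v).1
  refine ⟨t.attach.image g, hS'sub, ?_, ?_⟩
  · rw [Finset.card_image_of_injective _ hg_inj, Finset.card_attach]
    rw [Set.Finite.card_toFinset]
    exact hcard
  · have hS'span : Submodule.span ℝ (a' '' ↑(t.attach.image g)) = ⊤ := by
      rw [eq_top_iff, ← hs_span]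
      apply Submodule.span_mono
      intro v hv
      have hvt : v ∈ t := hs_fin.mem_toFinset.mpr hv
      refine ⟨g ⟨v, hvt⟩, ?_, (hg ⟨v, hvt⟩).2⟩
      exact Finset.mem_coe.mpr (Finset.mem_image_of_mem g (Finset.mem_attach _ _))
    ext x
    simp only [Set.mem_setOf_eq, Set.mem_singleton_iff]
    constructor
    · intro hx
      let x' : EuclideanSpace ℝ (Fin n) := WithLp.toLp 2 x
      set y : EuclideanSpace ℝ (Fin n) := x' - p' with hy_def
      have hy : ∀ i ∈ t.attach.image g, ⟪a' i, y⟫ = 0 := by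
        intro i hi
        have h1 : ⟪a' i, y⟫ = ⟪a' i, x'⟫ - ⟪a' i, p'⟫ := inner_sub_right _ _ _
        rw [h1, hinner i x', hinner i p']
        show (∑ j, a i j * x j) - (∑ j, a i j * p j) = 0
        rw [hx i hi, hpS i (hS'sub i hi), sub_self]
      have hall : ∀ u ∈ Submodule.span ℝ (a' '' ↑(t.attach.image g)), ⟪u, y⟫ = 0 := by
        intro u hu
        induction hu using Submodule.span_induction with
        | mem u hu => obtain ⟨i, hi, rfl⟩ := hu; exact hy i hi
        | zero => simp
        | add u v _ _ hu hv => rw [inner_add_left, hu, hv, add_zero]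
        | smul c u _ hu => rw [inner_smul_left, hu, mul_zero]
      have hzero : ⟪y, y⟫ = 0 := hall _ (by rw [hS'span]; trivial)
      have hxp : y = 0 := inner_self_eq_zero.mp hzero
      funext j
      have := congrArg (fun z : EuclideanSpace ℝ (Fin n) => z.ofLp j) hxp
      simpa [hy_def, sub_eq_zero, x', p'] using this
    · rintro rfl i hi
      exact hpS i (hS'sub i hi)
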